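/- Let k ≥ 3 and let G be a k-connected graph with independence number greater than k such that every independent set of cardinality k is a vertex cut of G. Then G has at least 2k+2 vertices. -/

import Mathlib

open SimpleGraph

/-- `G - S` is disconnected: some two remaining vertices are not connected. -/
def IsVertexCut {V : Type*} (G : SimpleGraph V) (S : Set V) : Prop :=
  ¬ (G.induce Sᶜ).Preconnected

/-- `G` is `k`-connected. -/
def KConnected {V : Type*} [Fintype V] (G : SimpleGraph V) (k : ℕ) : Prop :=
  k < Fintype.card V ∧ ∀ S : Finset V, S.card < k → ¬ IsVertexCut G ↑S

/-- `S` is an independent set of `G`. -/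
def IsIndep {V : Type*} (G : SimpleGraph V) (S : Set V) : Prop :=
  S.Pairwise fun u v => ¬ G.Adj u v

theorem stmt1 (k : ℕ) (hk : 3 ≤ k) (V : Type) [Fintype V] (G : SimpleGraph V)
    (hconn : KConnected G k) (hindep : ∃ S : Finset V, IsIndep G ↑S ∧ k < S.card)
    (hcut : ∀ S : Finset V, IsIndep G ↑S → S.card = k → IsVertexCut G ↑S) :
    2 * k + 2 ≤ Fintype.card V := by
  classical
  by_contra hV
  push_neg at hV
  -- minimum degree ≥ k
  have hdeg : ∀ v : V, k ≤ (G.neighborFinset v).card := by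
    intro v
    by_contra hlt
    push_neg at hlt
    apply hconn.2 (G.neighborFinset v) hlt
    have hvmem : v ∈ (↑(G.neighborFinset v) : Set V)ᶜ := by simp
    have hnon : (Finset.univ \ insert v (G.neighborFinset v)).Nonempty := by
      apply Finset.card_pos.mp
      rw [Finset.card_sdiff_of_subset (Finset.subset_univ _), Finset.card_univ]
      have h1 : (insert v (G.neighborFinset v)).card ≤ (G.neighborFinset v).card + 1 :=
        Finset.card_insert_le _ _
      have h2 := hconn.1
      omega
    obtain ⟨w, hw⟩ := hnon
    rw [Finset.mem_sdiff, Finset.mem_insert] at hw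
    push_neg at hw
    have hwmem : w ∈ (↑(G.neighborFinset v) : Set V)ᶜ := by
      simpa using hw.2.2
    intro hpre
    obtain ⟨p⟩ := hpre ⟨v, hvmem⟩ ⟨w, hwmem⟩
    cases p with
    | nil =>
      exact hw.2.1 rfl
    | cons h q =>
      rename_i b
      have hb := b.2
      simp only [Set.mem_compl_iff, Finset.coe_sort_coe, Finset.mem_coe,
        mem_neighborFinset] at hb
      exact hb (by simpa using h)
  -- extract independent set A of size k+1
  obtain ⟨S, hSind, hScard⟩ := hindep
  obtain ⟨A, hAS, hAcard⟩ := Finset.exists_subset_card_eq (s := S) (n := k + 1) hScard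
  have hAind : IsIndep G ↑A := hSind.mono (by exact_mod_cast hAS)
  -- every a ∈ A is adjacent to every b ∉ A
  have hadj : ∀ a ∈ A, ∀ b, b ∉ A → G.Adj a b := by
    intro a ha b hb
    have hsub : G.neighborFinset a ⊆ Finset.univ \ A := by
      intro x hx
      rw [Finset.mem_sdiff]
      refine ⟨Finset.mem_univ _, fun hxA => ?_⟩
      rw [mem_neighborFinset] at hx
      exact hAind (Finset.mem_coe.mpr ha) (Finset.mem_coe.mpr hxA) (G.ne_of_adj hx) hx
    have hcards : (Finset.univ \ A).card = Fintype.card V - (k + 1) := by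
      rw [Finset.card_sdiff_of_subset (Finset.subset_univ _), Finset.card_univ, hAcard]
    have heq : G.neighborFinset a = Finset.univ \ A := by
      apply Finset.eq_of_subset_of_card_le hsub
      have := hdeg a
      omega
    have : b ∈ G.neighborFinset a := by
      rw [heq, Finset.mem_sdiff]
      exact ⟨Finset.mem_univ _, hb⟩
    rwa [mem_neighborFinset] at this
  -- pick v ∈ A and consider T = A.erase v
  have hAne : A.Nonempty := Finset.card_pos.mp (by omega)
  obtain ⟨v, hv⟩ := hAne
  set T : Finset V := A.erase v with hT
  have hTcard : T.card = k := by
    rw [hT, Finset.card_erase_of_mem hv, hAcard]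
    omega
  have hTind : IsIndep G ↑T :=
    hAind.mono (by exact_mod_cast A.erase_subset v)
  have hvc := hcut T hTind hTcard
  apply hvc
  have hvT : v ∈ (↑T : Set V)ᶜ := by
    simp [hT]
  have key : ∀ z : ((↑T : Set V)ᶜ : Set V), (G.induce (↑T : Set V)ᶜ).Reachable z ⟨v, hvT⟩ := by
    rintro ⟨z, hz⟩
    by_cases hzv : z = v
    · subst hzv; exact Reachable.refl _
    · have hzA : z ∉ A := by
        intro hzA
        exact hz (Finset.mem_coe.mpr (Finset.mem_erase.mpr ⟨hzv, hzA⟩))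
      have hadj' : G.Adj v z := hadj v hv z hzA
      exact Adj.reachable (by simpa using hadj'.symm)
  intro x y
  exact (key x).trans (key y).symm
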